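/- Let A be a left Noetherian ring and M = A⟨f_1,...,f_s⟩_A a centralizing A-subbimodule of A^m with f_i ∈ Cen_A(M), and N = A⟨g_1,...,g_t⟩ a left A-submodule of A^l. Let Syz(M) ⊆ A^s and Syz(N) ⊆ A^t be the syzygy modules of the generating sets. Then the kernel of the left A-module surjection A^{st} → M ⊗_A N, e_{(i,j)} ↦ f_i ⊗ g_j, is generated by the columns of the block matrix [Syz(M) ⊗ I_t | I_s ⊗ Syz(N)], where Syz(M) and Syz(N) denote matrices whose columns generate the respective syzygy modules and ⊗ denotes the Kronecker product. -/

import Mathlib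

open scoped TensorProduct

/-- The `A`-submodule of relations defining the tensor product `M ⊗_A N` of an
`(A,A)`-bimodule `M` and a left `A`-module `N` as a quotient of `M ⊗_ℤ N`. -/
noncomputable def tensorRelationsA (A M N : Type*) [Ring A] [AddCommGroup M] [AddCommGroup N]
    [Module A M] [Module Aᵐᵒᵖ M] [SMulCommClass A Aᵐᵒᵖ M] [Module A N] :
    Submodule A (M ⊗[ℤ] N) :=
  Submodule.span A {x | ∃ (m : M) (s : A) (n : N),
    x = (MulOpposite.op s • m) ⊗ₜ[ℤ] n - m ⊗ₜ[ℤ] (s • n)}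

/-- The tensor product `M ⊗_A N` of an `(A,A)`-bimodule `M` and a left `A`-module `N`,
as a left `A`-module via the left action on `M`. -/
noncomputable def TensorOverA (A M N : Type*) [Ring A] [AddCommGroup M] [AddCommGroup N]
    [Module A M] [Module Aᵐᵒᵖ M] [SMulCommClass A Aᵐᵒᵖ M] [Module A N] : Type _ :=
  (M ⊗[ℤ] N) ⧸ tensorRelationsA A M N

noncomputable instance (A M N : Type*) [Ring A] [AddCommGroup M] [AddCommGroup N]
    [Module A M] [Module Aᵐᵒᵖ M] [SMulCommClass A Aᵐᵒᵖ M] [Module A N] :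
    AddCommGroup (TensorOverA A M N) := Submodule.Quotient.addCommGroup _

noncomputable instance (A M N : Type*) [Ring A] [AddCommGroup M] [AddCommGroup N]
    [Module A M] [Module Aᵐᵒᵖ M] [SMulCommClass A Aᵐᵒᵖ M] [Module A N] :
    Module A (TensorOverA A M N) := Submodule.Quotient.module _

/-- The elementary tensor `m ⊗ n` in `M ⊗_A N`. -/
noncomputable def tensorOverA {A M N : Type*} [Ring A] [AddCommGroup M] [AddCommGroup N]
    [Module A M] [Module Aᵐᵒᵖ M] [SMulCommClass A Aᵐᵒᵖ M] [Module A N]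
    (m : M) (n : N) : TensorOverA A M N :=
  Submodule.Quotient.mk (m ⊗ₜ[ℤ] n)

section Aux

variable {A M N : Type*} [Ring A] [AddCommGroup M] [AddCommGroup N]
  [Module A M] [Module Aᵐᵒᵖ M] [SMulCommClass A Aᵐᵒᵖ M] [Module A N]

lemma tensorOverA_add_left (x x' : M) (n : N) :
    tensorOverA (A := A) (x + x') n = tensorOverA (A := A) x n + tensorOverA (A := A) x' n := by
  rw [tensorOverA, tensorOverA, tensorOverA, TensorProduct.add_tmul, Submodule.Quotient.mk_add]
  rfl

lemma tensorOverA_add_right (x : M) (n n' : N) :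
    tensorOverA (A := A) x (n + n') = tensorOverA (A := A) x n + tensorOverA (A := A) x n' := by
  rw [tensorOverA, tensorOverA, tensorOverA, TensorProduct.tmul_add, Submodule.Quotient.mk_add]
  rfl

lemma tensorOverA_smul_left (a : A) (x : M) (n : N) :
    tensorOverA (A := A) (a • x) n = a • tensorOverA (A := A) x n := by
  rw [tensorOverA, tensorOverA, ← TensorProduct.smul_tmul', Submodule.Quotient.mk_smul]
  rfl

lemma tensorOverA_zero_left (n : N) : tensorOverA (A := A) (0 : M) n = 0 := by
  rw [tensorOverA, TensorProduct.zero_tmul, Submodule.Quotient.mk_zero]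
  rfl

lemma tensorOverA_zero_right (x : M) : tensorOverA (A := A) x (0 : N) = 0 := by
  rw [tensorOverA, TensorProduct.tmul_zero, Submodule.Quotient.mk_zero]
  rfl

lemma tensorOverA_rel (a : A) (x : M) (n : N) :
    tensorOverA (A := A) (MulOpposite.op a • x) n = tensorOverA (A := A) x (a • n) := by
  rw [tensorOverA, tensorOverA]
  refine (Submodule.Quotient.eq _).mpr ?_
  exact Submodule.subset_span ⟨x, a, n, rfl⟩

lemma tensorOverA_sum_left {ι : Type*} (u : Finset ι) (w : ι → M) (n : N) :
    tensorOverA (A := A) (∑ i ∈ u, w i) n = ∑ i ∈ u, tensorOverA (A := A) (w i) n := by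
  classical
  induction u using Finset.induction with
  | empty => simpa using tensorOverA_zero_left (A := A) n
  | insert _ _ hx ih =>
      rw [Finset.sum_insert hx, Finset.sum_insert hx, tensorOverA_add_left, ih]

lemma tensorOverA_sum_right {ι : Type*} (u : Finset ι) (x : M) (w : ι → N) :
    tensorOverA (A := A) x (∑ i ∈ u, w i) = ∑ i ∈ u, tensorOverA (A := A) x (w i) := by
  classical
  induction u using Finset.induction with
  | empty => simpa using tensorOverA_zero_right (A := A) x
  | insert _ _ hx ih =>
      rw [Finset.sum_insert hx, Finset.sum_insert hx, tensorOverA_add_right, ih]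

variable {Q : Type*} [AddCommGroup Q] [Module A Q]

/-- Lift a suitably bilinear map to `TensorOverA`. -/
noncomputable def liftTOA (h : M → N → Q)
    (hl : ∀ x x' n, h (x + x') n = h x n + h x' n)
    (hr : ∀ x n n', h x (n + n') = h x n + h x n')
    (hs : ∀ (a : A) x n, h (a • x) n = a • h x n)
    (hrel : ∀ (a : A) x n, h (MulOpposite.op a • x) n = h x (a • n)) :
    TensorOverA A M N →ₗ[A] Q := by
  refine Submodule.liftQ _ ?_ ?_
  · refine
      { toFun := TensorProduct.lift
          ((AddMonoidHom.mk' (fun x => (AddMonoidHom.mk' (h x) (hr x)).toIntLinearMap)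
            (fun x x' => LinearMap.ext fun n => hl x x' n)).toIntLinearMap)
        map_add' := fun a b => map_add _ a b
        map_smul' := ?_ }
    intro a z
    induction z using TensorProduct.induction_on with
    | zero => simp
    | tmul x n =>
        rw [TensorProduct.smul_tmul']
        simp only [RingHom.id_apply, TensorProduct.lift.tmul]
        exact hs a x n
    | add y z hy hz =>
        simp only [smul_add, map_add, RingHom.id_apply] at *
        rw [hy, hz]
  · rw [tensorRelationsA, Submodule.span_le]
    rintro w ⟨x, a, n, rfl⟩
    simp only [SetLike.mem_coe, LinearMap.mem_ker, map_sub]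
    change TensorProduct.lift _ _ - TensorProduct.lift _ _ = 0
    rw [TensorProduct.lift.tmul, TensorProduct.lift.tmul]
    exact sub_eq_zero.mpr (hrel a x n)

lemma liftTOA_tensorOverA (h : M → N → Q) (hl hr hs hrel) (x : M) (n : N) :
    liftTOA h hl hr hs hrel (tensorOverA (A := A) x n) = h x n := by
  rfl

end Aux


/-- Theorem 12 of the paper. Let `A` be a left Noetherian ring,
`M = A⟨f_1,…,f_s⟩_A` a centralizing `A`-subbimodule of `A^m` with `f_i ∈ Cen_A(M)`,
and `N = A⟨g_1,…,g_t⟩` a left `A`-submodule of `A^l`.  Let `Syz(M) ⊆ A^s` and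
`Syz(N) ⊆ A^t` be the syzygy modules of the generating sets, generated by the columns
`zM_1,…,zM_r` resp. `zN_1,…,zN_p` of matrices `Syz(M)`, `Syz(N)`.  Then the kernel of the
left `A`-linear surjection `A^{st} → M ⊗_A N`, `e_{(i,j)} ↦ f_i ⊗ g_j`, is generated by
the columns of the block matrix `[Syz(M) ⊗ I_t | I_s ⊗ Syz(N)]` (Kronecker products). -/
theorem syz_of_tensor_eq_span_kronecker {A : Type*} [Ring A] [IsNoetherianRing A]
    {M : Type*} [AddCommGroup M] [Module A M] [Module Aᵐᵒᵖ M] [SMulCommClass A Aᵐᵒᵖ M]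
    {N : Type*} [AddCommGroup N] [Module A N]
    {m l s t r p : ℕ}
    (ι : M →ₗ[A] (Fin m → A)) (hι : Function.Injective ι)
    (hιr : ∀ (a : A) (x : M), ι (MulOpposite.op a • x) = MulOpposite.op a • ι x)
    (κ : N →ₗ[A] (Fin l → A)) (hκ : Function.Injective κ)
    (f : Fin s → M) (hcen : ∀ i, ∀ a : A, MulOpposite.op a • f i = a • f i)
    (hfgen : Submodule.span A (Set.range f) = ⊤)
    (g : Fin t → N) (hggen : Submodule.span A (Set.range g) = ⊤)
    (zM : Fin r → (Fin s → A))
    (hzM : Submodule.span A (Set.range zM) =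
      LinearMap.ker (Fintype.linearCombination A f))
    (zN : Fin p → (Fin t → A))
    (hzN : Submodule.span A (Set.range zN) =
      LinearMap.ker (Fintype.linearCombination A g)) :
    LinearMap.ker (Fintype.linearCombination A
        (fun q : Fin s × Fin t => tensorOverA (A := A) (f q.1) (g q.2))) =
      Submodule.span A
        ((Set.range fun kj : Fin r × Fin t =>
            (fun q : Fin s × Fin t => if q.2 = kj.2 then zM kj.1 q.1 else 0)) ∪
         (Set.range fun ik : Fin s × Fin p =>
            (fun q : Fin s × Fin t => if q.1 = ik.1 then zN ik.2 q.2 else 0))) := by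
  classical
  have hzMk : ∀ k, ∑ i, zM k i • f i = 0 := by
    intro k
    have hk : zM k ∈ LinearMap.ker (Fintype.linearCombination A f) :=
      hzM ▸ Submodule.subset_span ⟨k, rfl⟩
    rwa [LinearMap.mem_ker, Fintype.linearCombination_apply] at hk
  have hzNk : ∀ k, ∑ j, zN k j • g j = 0 := by
    intro k
    have hk : zN k ∈ LinearMap.ker (Fintype.linearCombination A g) :=
      hzN ▸ Submodule.subset_span ⟨k, rfl⟩
    rwa [LinearMap.mem_ker, Fintype.linearCombination_apply] at hk
  -- the map A^{s×t} → M^t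
  let π1 : (Fin s × Fin t → A) →ₗ[A] (Fin t → M) :=
    { toFun := fun c j => ∑ i, c (i, j) • f i
      map_add' := by
        intro c d; funext j
        simp [add_smul, Finset.sum_add_distrib]
      map_smul' := by
        intro a c; funext j
        simp [mul_smul, Finset.smul_sum] }
  -- the map M^t → M ⊗_A N
  let μ : (Fin t → M) →ₗ[A] TensorOverA A M N :=
    { toFun := fun w => ∑ j, tensorOverA (A := A) (w j) (g j)
      map_add' := by
        intro w w'
        rw [← Finset.sum_add_distrib]
        exact Finset.sum_congr rfl fun j _ => tensorOverA_add_left _ _ _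
      map_smul' := by
        intro a w
        simp only [RingHom.id_apply, Finset.smul_sum]
        exact Finset.sum_congr rfl fun j _ => tensorOverA_smul_left _ _ _ }
  have hφ : Fintype.linearCombination A
      (fun q : Fin s × Fin t => tensorOverA (A := A) (f q.1) (g q.2)) = μ.comp π1 := by
    refine LinearMap.ext fun c => ?_
    rw [Fintype.linearCombination_apply]
    show ∑ q : Fin s × Fin t, c q • tensorOverA (A := A) (f q.1) (g q.2)
        = ∑ j, tensorOverA (A := A) (∑ i, c (i, j) • f i) (g j)
    rw [Fintype.sum_prod_type, Finset.sum_comm]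
    refine Finset.sum_congr rfl fun j _ => ?_
    rw [tensorOverA_sum_left]
    exact Finset.sum_congr rfl fun i _ => (tensorOverA_smul_left _ _ _).symm
  -- target generators of ker μ
  let v : Fin s × Fin p → (Fin t → M) := fun ik j => zN ik.2 j • f ik.1
  -- key span lemma
  have hL : ∀ d ∈ Submodule.span A (Set.range zN), ∀ x : M,
      (fun j => MulOpposite.op (d j) • x) ∈ Submodule.span A (Set.range v) := by
    intro d hd
    induction hd using Submodule.span_induction with
    | mem d hd =>
        obtain ⟨k, rfl⟩ := hd
        intro x
        have hx : x ∈ Submodule.span A (Set.range f) := hfgen.symm ▸ Submodule.mem_top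
        induction hx using Submodule.span_induction with
        | mem y hy =>
            obtain ⟨i, rfl⟩ := hy
            have : (fun j => MulOpposite.op (zN k j) • f i) = v (i, k) :=
              funext fun j => hcen i (zN k j)
            rw [this]
            exact Submodule.subset_span ⟨(i, k), rfl⟩
        | zero =>
            simp only [smul_zero]
            exact Submodule.zero_mem _
        | add y z hy hz hy' hz' =>
            have : (fun j => MulOpposite.op (zN k j) • (y + z))
                = (fun j => MulOpposite.op (zN k j) • y) + fun j => MulOpposite.op (zN k j) • z :=
              funext fun j => smul_add _ _ _
            rw [this]
            exact Submodule.add_mem _ hy' hz'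
        | smul a y hy hy' =>
            have : (fun j => MulOpposite.op (zN k j) • (a • y))
                = a • fun j => MulOpposite.op (zN k j) • y :=
              funext fun j => (smul_comm a (MulOpposite.op (zN k j)) y).symm
            rw [this]
            exact Submodule.smul_mem _ _ hy'
    | zero =>
        intro x
        simp only [Pi.zero_apply, MulOpposite.op_zero, zero_smul]
        exact Submodule.zero_mem _
    | add d d' hd hd' ih ih' =>
        intro x
        have : (fun j => MulOpposite.op ((d + d') j) • x)
            = (fun j => MulOpposite.op (d j) • x) + fun j => MulOpposite.op (d' j) • x := by
          funext j
          simp [MulOpposite.op_add, add_smul]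
        rw [this]
        exact Submodule.add_mem _ (ih x) (ih' x)
    | smul a d hd ih =>
        intro x
        have : (fun j => MulOpposite.op ((a • d) j) • x)
            = fun j => MulOpposite.op (d j) • (MulOpposite.op a • x) := by
          funext j
          simp [MulOpposite.op_mul, mul_smul, smul_eq_mul]
        rw [this]
        exact ih (MulOpposite.op a • x)
  -- surjectivity of the generating map for N
  have hgsurj : Function.Surjective (Fintype.linearCombination A g) := by
    rw [← LinearMap.range_eq_top, Fintype.range_linearCombination, hggen]
  let σ : N → (Fin t → A) := Function.surjInv hgsurj
  have hσ : ∀ n, Fintype.linearCombination A g (σ n) = n :=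
    fun n => Function.surjInv_eq hgsurj n
  -- the bilinear map into (Fin t → M) ⧸ span v
  let h : M → N → (Fin t → M) ⧸ Submodule.span A (Set.range v) :=
    fun x n => Submodule.Quotient.mk (fun j => MulOpposite.op (σ n j) • x)
  have hkey : ∀ (x : M) (n : N) (b : Fin t → A), Fintype.linearCombination A g b = n →
      h x n = Submodule.Quotient.mk (fun j => MulOpposite.op (b j) • x) := by
    intro x n b hb
    show Submodule.Quotient.mk _ = Submodule.Quotient.mk _
    rw [Submodule.Quotient.eq]
    have hdmem : σ n - b ∈ Submodule.span A (Set.range zN) := by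
      rw [hzN, LinearMap.mem_ker, map_sub, hb, hσ, sub_self]
    have h2 := hL _ hdmem x
    have heq : ((fun j => MulOpposite.op (σ n j) • x) - fun j => MulOpposite.op (b j) • x)
        = fun j => MulOpposite.op ((σ n - b) j) • x := by
      funext j
      simp [MulOpposite.op_sub, sub_smul]
    rw [heq]
    exact h2
  have hl : ∀ x x' n, h (x + x') n = h x n + h x' n := by
    intro x x' n
    show Submodule.Quotient.mk _ = Submodule.Quotient.mk _ + Submodule.Quotient.mk _
    rw [← Submodule.Quotient.mk_add]
    congr 1
    funext j
    simp [smul_add]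
  have hr : ∀ x n n', h x (n + n') = h x n + h x n' := by
    intro x n n'
    rw [hkey x (n + n') (σ n + σ n') (by rw [map_add, hσ, hσ])]
    show Submodule.Quotient.mk _ = Submodule.Quotient.mk _ + Submodule.Quotient.mk _
    rw [← Submodule.Quotient.mk_add]
    congr 1
    funext j
    simp [MulOpposite.op_add, add_smul]
  have hs : ∀ (a : A) x n, h (a • x) n = a • h x n := by
    intro a x n
    show Submodule.Quotient.mk _ = a • Submodule.Quotient.mk _
    rw [← Submodule.Quotient.mk_smul]
    congr 1
    exact funext fun j => (smul_comm a (MulOpposite.op (σ n j)) x).symm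
  have hrel : ∀ (a : A) x n, h (MulOpposite.op a • x) n = h x (a • n) := by
    intro a x n
    rw [hkey x (a • n) (a • σ n) (by rw [map_smul, hσ])]
    show Submodule.Quotient.mk _ = Submodule.Quotient.mk _
    congr 1
    funext j
    simp [MulOpposite.op_mul, mul_smul, smul_eq_mul]
  let θ := liftTOA h hl hr hs hrel
  have hθμ : ∀ w : Fin t → M, θ (μ w) = Submodule.Quotient.mk w := by
    intro w
    show θ (∑ j, tensorOverA (A := A) (w j) (g j)) = _
    rw [map_sum]
    have hterm : ∀ j, θ (tensorOverA (A := A) (w j) (g j))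
        = Submodule.Quotient.mk (Pi.single j (w j)) := by
      intro j
      show liftTOA h hl hr hs hrel (tensorOverA (A := A) (w j) (g j)) = _
      rw [liftTOA_tensorOverA]
      rw [hkey (w j) (g j) (Pi.single j 1)
        (by rw [Fintype.linearCombination_apply_single, one_smul])]
      congr 1
      funext j'
      by_cases hj : j' = j
      · subst hj
        simp
      · simp [Pi.single_eq_of_ne hj]
    rw [Finset.sum_congr rfl fun j _ => hterm j]
    have : (∑ j, Submodule.Quotient.mk (Pi.single j (w j)) :
        (Fin t → M) ⧸ Submodule.span A (Set.range v))
        = (Submodule.span A (Set.range v)).mkQ (∑ j, Pi.single j (w j)) := by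
      rw [map_sum]
      rfl
    rw [this, Finset.univ_sum_single]
    rfl
  have hkerμ : LinearMap.ker μ = Submodule.span A (Set.range v) := by
    apply le_antisymm
    · intro w hw
      have h0 : θ (μ w) = 0 := by rw [LinearMap.mem_ker.mp hw, map_zero]
      rw [hθμ] at h0
      rwa [Submodule.Quotient.mk_eq_zero] at h0
    · rw [Submodule.span_le]
      rintro _ ⟨ik, rfl⟩
      simp only [SetLike.mem_coe, LinearMap.mem_ker]
      show ∑ j, tensorOverA (A := A) (zN ik.2 j • f ik.1) (g j) = 0
      have : ∀ j, tensorOverA (A := A) (zN ik.2 j • f ik.1) (g j)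
          = tensorOverA (A := A) (f ik.1) (zN ik.2 j • g j) := by
        intro j
        rw [← hcen ik.1 (zN ik.2 j), tensorOverA_rel]
      rw [Finset.sum_congr rfl fun j _ => this j, ← tensorOverA_sum_right, hzNk,
        tensorOverA_zero_right]
  have hkerπ1 : LinearMap.ker π1 = Submodule.span A
      (Set.range fun kj : Fin r × Fin t =>
        (fun q : Fin s × Fin t => if q.2 = kj.2 then zM kj.1 q.1 else 0)) := by
    apply le_antisymm
    · intro c hc
      have hcol : ∀ j, (fun i => c (i, j)) ∈ Submodule.span A (Set.range zM) := by
        intro j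
        rw [hzM, LinearMap.mem_ker, Fintype.linearCombination_apply]
        exact congrFun (LinearMap.mem_ker.mp hc) j
      let E : Fin t → ((Fin s → A) →ₗ[A] (Fin s × Fin t → A)) := fun j =>
        { toFun := fun a q => if q.2 = j then a q.1 else 0
          map_add' := by
            intro a b; funext q
            by_cases hq : q.2 = j <;> simp [hq]
          map_smul' := by
            intro x a; funext q
            by_cases hq : q.2 = j <;> simp [hq] }
      have hc_eq : c = ∑ j, E j (fun i => c (i, j)) := by
        funext q
        rw [Finset.sum_apply]
        show c q = ∑ j, (if q.2 = j then c (q.1, j) else 0)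
        rw [Finset.sum_ite_eq]
        simp
      rw [hc_eq]
      refine Submodule.sum_mem _ fun j _ => ?_
      have hmem : E j (fun i => c (i, j)) ∈ Submodule.map (E j) (Submodule.span A (Set.range zM)) :=
        Submodule.mem_map_of_mem (hcol j)
      rw [Submodule.map_span] at hmem
      refine Submodule.span_mono ?_ hmem
      rintro _ ⟨_, ⟨k, rfl⟩, rfl⟩
      exact ⟨(k, j), rfl⟩
    · rw [Submodule.span_le]
      rintro _ ⟨kj, rfl⟩
      simp only [SetLike.mem_coe, LinearMap.mem_ker]
      show (fun j => ∑ i, (if j = kj.2 then zM kj.1 i else 0) • f i) = 0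
      funext j
      by_cases hj : j = kj.2
      · simpa [hj] using hzMk kj.1
      · simp [hj]
  have hmap : Submodule.map π1 (Submodule.span A
        (Set.range fun ik : Fin s × Fin p =>
          (fun q : Fin s × Fin t => if q.1 = ik.1 then zN ik.2 q.2 else 0)))
      = Submodule.span A (Set.range v) := by
    rw [Submodule.map_span, ← Set.range_comp]
    refine congrArg _ (congrArg Set.range (funext fun ik => ?_))
    show (fun j => ∑ i, (if i = ik.1 then zN ik.2 j else 0) • f i) = v ik
    funext j
    simp [ite_smul]
    rfl
  rw [hφ, LinearMap.ker_comp, hkerμ, ← hmap, Submodule.comap_map_eq, hkerπ1,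
    Submodule.span_union, sup_comm]
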